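/- Let x₀(u,v) = ((u² − v²)/4 − (u⁴ − 6u²v² + v⁴)/8, −uv/2 − (u³v − uv³)/2, (u³ − 3uv²)/3), and set L̃ = (x_u × x_v)·x_uu, M̃ = (x_u × x_v)·x_uv, Ñ = (x_u × x_v)·x_vv. Then for all (u,v) ∈ ℝ²: L̃Ñ − M̃² = −(1/16)(u² + v²)³(1 + u² + v²)⁴. Consequently, for (u,v) ≠ (0,0), the Gauss curvature K = (L̃Ñ − M̃²)/(EG − F²)² equals −16/((u² + v²)(1 + u² + v²)⁴), so the normal curvature ν₀ = √(−K) equals 4/(√(u² + v²)(1 + u² + v²)²). -/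

import Mathlib

noncomputable section

/-- Euclidean dot product in `ℝ³`. -/
def dot3 (a b : Fin 3 → ℝ) : ℝ := a 0 * b 0 + a 1 * b 1 + a 2 * b 2

/-- Cross product in `ℝ³`. -/
def cross3 (a b : Fin 3 → ℝ) : Fin 3 → ℝ :=
  ![a 1 * b 2 - a 2 * b 1, a 2 * b 0 - a 0 * b 2, a 0 * b 1 - a 1 * b 0]

/-- Partial derivative of a chart with respect to the first variable. -/
def pu (x : ℝ → ℝ → Fin 3 → ℝ) : ℝ → ℝ → Fin 3 → ℝ :=
  fun u v i => deriv (fun t => x t v i) u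

/-- Partial derivative of a chart with respect to the second variable. -/
def pv (x : ℝ → ℝ → Fin 3 → ℝ) : ℝ → ℝ → Fin 3 → ℝ :=
  fun u v i => deriv (fun t => x u t i) v

/-- The chart is isothermal: `E = G` and `F = 0` identically. -/
def Isothermal (x : ℝ → ℝ → Fin 3 → ℝ) : Prop :=
  ∀ u v : ℝ,
    dot3 (pu x u v) (pu x u v) = dot3 (pv x u v) (pv x u v) ∧
    dot3 (pu x u v) (pv x u v) = 0

/-- The chart is harmonic: `x_uu + x_vv = 0` identically. -/
def Harmonic (x : ℝ → ℝ → Fin 3 → ℝ) : Prop :=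
  ∀ u v : ℝ, ∀ i : Fin 3, pu (pu x) u v i + pv (pv x) u v i = 0

/-- The chart `x` is generated by the Weierstrass data `(f, g)`:
for `z = u + iv`, `x_u - i x_v = (½ f (1 - g²), (i/2) f (1 + g²), f g)`. -/
def GeneratedBy (x : ℝ → ℝ → Fin 3 → ℝ) (f g : ℂ → ℂ) : Prop :=
  ∀ u v : ℝ,
    (pu x u v 0 : ℂ) - Complex.I * (pv x u v 0)
        = (1 / 2) * f (u + v * Complex.I) * (1 - (g (u + v * Complex.I)) ^ 2) ∧
    (pu x u v 1 : ℂ) - Complex.I * (pv x u v 1)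
        = (Complex.I / 2) * f (u + v * Complex.I) * (1 + (g (u + v * Complex.I)) ^ 2) ∧
    (pu x u v 2 : ℂ) - Complex.I * (pv x u v 2)
        = f (u + v * Complex.I) * g (u + v * Complex.I)

/-- The real part of the Weierstrass minimal curve with `f(z) = z`, `g(z) = z`. -/
def x₀ : ℝ → ℝ → Fin 3 → ℝ :=
  fun u v => ![(u ^ 2 - v ^ 2) / 4 - (u ^ 4 - 6 * u ^ 2 * v ^ 2 + v ^ 4) / 8,
               -(u * v) / 2 - (u ^ 3 * v - u * v ^ 3) / 2,
               (u ^ 3 - 3 * u * v ^ 2) / 3]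


lemma dp' (a b c d e u : ℝ) :
    deriv (fun t : ℝ => a*t^4 + b*t^3 + c*t^2 + d*t + e) u
      = 4*a*u^3 + 3*b*u^2 + 2*c*u + d := by
  have h : HasDerivAt (fun t : ℝ => a*t^4 + b*t^3 + c*t^2 + d*t + e)
      (4*a*u^3 + 3*b*u^2 + 2*c*u + d) u := by
    have := (((((hasDerivAt_pow 4 u).const_mul a).add
        ((hasDerivAt_pow 3 u).const_mul b)).add
        ((hasDerivAt_pow 2 u).const_mul c)).add
        ((hasDerivAt_id u).const_mul d)).add (hasDerivAt_const u e)
    refine this.congr_deriv ?_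
    push_cast; ring
  exact h.deriv

lemma deriv_canon (f : ℝ → ℝ) (a b c d e u : ℝ)
    (h : ∀ t, f t = a*t^4+b*t^3+c*t^2+d*t+e) :
    deriv f u = 4*a*u^3 + 3*b*u^2 + 2*c*u + d := by
  rw [show f = fun t => a*t^4+b*t^3+c*t^2+d*t+e from funext h]; exact dp' a b c d e u

lemma pu_x₀ : pu x₀ = fun u v =>
    ![u/2 - (u^3 - 3*u*v^2)/2, -(v/2) - (3*u^2*v - v^3)/2, u^2 - v^2] := by
  funext u v i
  fin_cases i
  · show deriv (fun t => x₀ t v 0) u = u/2 - (u^3 - 3*u*v^2)/2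
    simp only [x₀, Matrix.cons_val_zero]
    rw [deriv_canon _ (-(1/8)) 0 (1/4 + 3*v^2/4) 0 (-(v^2)/4 - v^4/8) u (fun t => by ring)]
    ring
  · show deriv (fun t => x₀ t v 1) u = -(v/2) - (3*u^2*v - v^3)/2
    simp only [x₀, Matrix.cons_val_one, Matrix.head_cons, Matrix.cons_val_zero]
    rw [deriv_canon _ 0 (-(v/2)) 0 (-(v/2) + v^3/2) 0 u (fun t => by ring)]; ring
  · show deriv (fun t => x₀ t v 2) u = u^2 - v^2
    simp only [x₀, Matrix.cons_val_two, Matrix.tail_cons, Matrix.head_cons]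
    rw [deriv_canon _ 0 (1/3) 0 (-(v^2)) 0 u (fun t => by ring)]; ring

lemma pv_x₀ : pv x₀ = fun u v =>
    ![-(v/2) + (3*u^2*v - v^3)/2, -(u/2) - (u^3 - 3*u*v^2)/2, -(2*u*v)] := by
  funext u v i
  fin_cases i
  · show deriv (fun t => x₀ u t 0) v = -(v/2) + (3*u^2*v - v^3)/2
    simp only [x₀, Matrix.cons_val_zero]
    rw [deriv_canon _ (-(1/8)) 0 (-(1/4) + 3*u^2/4) 0 (u^2/4 - u^4/8) v (fun t => by ring)]
    ring
  · show deriv (fun t => x₀ u t 1) v = -(u/2) - (u^3 - 3*u*v^2)/2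
    simp only [x₀, Matrix.cons_val_one, Matrix.head_cons, Matrix.cons_val_zero]
    rw [deriv_canon _ 0 (u/2) 0 (-(u/2) - u^3/2) 0 v (fun t => by ring)]; ring
  · show deriv (fun t => x₀ u t 2) v = -(2*u*v)
    simp only [x₀, Matrix.cons_val_two, Matrix.tail_cons, Matrix.head_cons]
    rw [deriv_canon _ 0 0 (-u) 0 (u^3/3) v (fun t => by ring)]; ring

lemma puu_x₀ : pu (pu x₀) = fun u v =>
    ![1/2 - (3*u^2 - 3*v^2)/2, -(3*u*v), 2*u] := by
  rw [pu_x₀]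
  funext u v i
  set E : ℝ → ℝ → Fin 3 → ℝ := fun u v =>
    ![u/2 - (u^3 - 3*u*v^2)/2, -(v/2) - (3*u^2*v - v^3)/2, u^2 - v^2] with hE
  fin_cases i
  · show deriv (fun t => E t v 0) u = 1/2 - (3*u^2 - 3*v^2)/2
    simp only [hE, Matrix.cons_val_zero]
    rw [deriv_canon _ 0 (-(1/2)) 0 (1/2 + 3*v^2/2) 0 u (fun t => by ring)]; ring
  · show deriv (fun t => E t v 1) u = -(3*u*v)
    simp only [hE, Matrix.cons_val_one, Matrix.head_cons, Matrix.cons_val_zero]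
    rw [deriv_canon _ 0 0 (-(3*v/2)) 0 (-(v/2) + v^3/2) u (fun t => by ring)]; ring
  · show deriv (fun t => E t v 2) u = 2*u
    simp only [hE, Matrix.cons_val_two, Matrix.tail_cons, Matrix.head_cons]
    rw [deriv_canon _ 0 0 1 0 (-(v^2)) u (fun t => by ring)]; ring

lemma puv_x₀ : pv (pu x₀) = fun u v =>
    ![3*u*v, -(1/2) - (3*u^2 - 3*v^2)/2, -(2*v)] := by
  rw [pu_x₀]
  funext u v i
  set E : ℝ → ℝ → Fin 3 → ℝ := fun u v =>
    ![u/2 - (u^3 - 3*u*v^2)/2, -(v/2) - (3*u^2*v - v^3)/2, u^2 - v^2] with hE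
  fin_cases i
  · show deriv (fun t => E u t 0) v = 3*u*v
    simp only [hE, Matrix.cons_val_zero]
    rw [deriv_canon _ 0 0 (3*u/2) 0 (u/2 - u^3/2) v (fun t => by ring)]; ring
  · show deriv (fun t => E u t 1) v = -(1/2) - (3*u^2 - 3*v^2)/2
    simp only [hE, Matrix.cons_val_one, Matrix.head_cons, Matrix.cons_val_zero]
    rw [deriv_canon _ 0 (1/2) 0 (-(1/2) - 3*u^2/2) 0 v (fun t => by ring)]; ring
  · show deriv (fun t => E u t 2) v = -(2*v)
    simp only [hE, Matrix.cons_val_two, Matrix.tail_cons, Matrix.head_cons]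
    rw [deriv_canon _ 0 0 (-1) 0 (u^2) v (fun t => by ring)]; ring

lemma pvv_x₀ : pv (pv x₀) = fun u v =>
    ![-(1/2) + (3*u^2 - 3*v^2)/2, 3*u*v, -(2*u)] := by
  rw [pv_x₀]
  funext u v i
  set E : ℝ → ℝ → Fin 3 → ℝ := fun u v =>
    ![-(v/2) + (3*u^2*v - v^3)/2, -(u/2) - (u^3 - 3*u*v^2)/2, -(2*u*v)] with hE
  fin_cases i
  · show deriv (fun t => E u t 0) v = -(1/2) + (3*u^2 - 3*v^2)/2
    simp only [hE, Matrix.cons_val_zero]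
    rw [deriv_canon _ 0 (-(1/2)) 0 (-(1/2) + 3*u^2/2) 0 v (fun t => by ring)]; ring
  · show deriv (fun t => E u t 1) v = 3*u*v
    simp only [hE, Matrix.cons_val_one, Matrix.head_cons, Matrix.cons_val_zero]
    rw [deriv_canon _ 0 0 (3*u/2) 0 (-(u/2) - u^3/2) v (fun t => by ring)]; ring
  · show deriv (fun t => E u t 2) v = -(2*u)
    simp only [hE, Matrix.cons_val_two, Matrix.tail_cons, Matrix.head_cons]
    rw [deriv_canon _ 0 0 0 (-(2*u)) 0 v (fun t => by ring)]; ring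

/-- with `L̃ = (x_u × x_v)·x_uu`, `M̃ = (x_u × x_v)·x_uv`,
`Ñ = (x_u × x_v)·x_vv`, one has
`L̃Ñ - M̃² = -(1/16)(u² + v²)³(1 + u² + v²)⁴`; hence away from the origin the Gauss
curvature `K = (L̃Ñ - M̃²)/(EG - F²)²` equals `-16/((u² + v²)(1 + u² + v²)⁴)` and the
normal curvature `√(-K)` equals `4/(√(u² + v²)(1 + u² + v²)²)`. -/
theorem x₀_gauss_and_normal_curvature :
    ∀ u v : ℝ,
      dot3 (cross3 (pu x₀ u v) (pv x₀ u v)) (pu (pu x₀) u v)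
          * dot3 (cross3 (pu x₀ u v) (pv x₀ u v)) (pv (pv x₀) u v)
        - (dot3 (cross3 (pu x₀ u v) (pv x₀ u v)) (pv (pu x₀) u v)) ^ 2
        = -(1 / 16) * (u ^ 2 + v ^ 2) ^ 3 * (1 + u ^ 2 + v ^ 2) ^ 4 ∧
      ((u, v) ≠ (0, 0) →
        (dot3 (cross3 (pu x₀ u v) (pv x₀ u v)) (pu (pu x₀) u v)
            * dot3 (cross3 (pu x₀ u v) (pv x₀ u v)) (pv (pv x₀) u v)
          - (dot3 (cross3 (pu x₀ u v) (pv x₀ u v)) (pv (pu x₀) u v)) ^ 2)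
          / (dot3 (pu x₀ u v) (pu x₀ u v) * dot3 (pv x₀ u v) (pv x₀ u v)
              - (dot3 (pu x₀ u v) (pv x₀ u v)) ^ 2) ^ 2
          = -16 / ((u ^ 2 + v ^ 2) * (1 + u ^ 2 + v ^ 2) ^ 4) ∧
        Real.sqrt (-((dot3 (cross3 (pu x₀ u v) (pv x₀ u v)) (pu (pu x₀) u v)
            * dot3 (cross3 (pu x₀ u v) (pv x₀ u v)) (pv (pv x₀) u v)
          - (dot3 (cross3 (pu x₀ u v) (pv x₀ u v)) (pv (pu x₀) u v)) ^ 2)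
          / (dot3 (pu x₀ u v) (pu x₀ u v) * dot3 (pv x₀ u v) (pv x₀ u v)
              - (dot3 (pu x₀ u v) (pv x₀ u v)) ^ 2) ^ 2))
          = 4 / (Real.sqrt (u ^ 2 + v ^ 2) * (1 + u ^ 2 + v ^ 2) ^ 2)) := by
  intro u v
  have hnum :
      dot3 (cross3 (pu x₀ u v) (pv x₀ u v)) (pu (pu x₀) u v)
          * dot3 (cross3 (pu x₀ u v) (pv x₀ u v)) (pv (pv x₀) u v)
        - (dot3 (cross3 (pu x₀ u v) (pv x₀ u v)) (pv (pu x₀) u v)) ^ 2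
        = -(1 / 16) * (u ^ 2 + v ^ 2) ^ 3 * (1 + u ^ 2 + v ^ 2) ^ 4 := by
    rw [puu_x₀, puv_x₀, pvv_x₀, pu_x₀, pv_x₀]
    simp only [dot3, cross3,
      Matrix.cons_val_zero, Matrix.cons_val_one, Matrix.head_cons,
      Matrix.cons_val_two, Matrix.tail_cons]
    ring
  have hden :
      dot3 (pu x₀ u v) (pu x₀ u v) * dot3 (pv x₀ u v) (pv x₀ u v)
          - (dot3 (pu x₀ u v) (pv x₀ u v)) ^ 2
        = (u ^ 2 + v ^ 2) ^ 2 * (1 + u ^ 2 + v ^ 2) ^ 4 / 16 := by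
    rw [pu_x₀, pv_x₀]
    simp only [dot3,
      Matrix.cons_val_zero, Matrix.cons_val_one, Matrix.head_cons,
      Matrix.cons_val_two, Matrix.tail_cons]
    ring
  refine ⟨hnum, fun h => ?_⟩
  have huv : u ≠ 0 ∨ v ≠ 0 := by
    by_contra hc
    push_neg at hc
    exact h (by simp [hc.1, hc.2])
  have hr : 0 < u ^ 2 + v ^ 2 := by
    rcases huv with h' | h'
    · nlinarith [sq_nonneg v, (by positivity : (0:ℝ) < u ^ 2)]
    · nlinarith [sq_nonneg u, (by positivity : (0:ℝ) < v ^ 2)]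
  have h1r : 0 < 1 + u ^ 2 + v ^ 2 := by positivity
  have hK :
      (dot3 (cross3 (pu x₀ u v) (pv x₀ u v)) (pu (pu x₀) u v)
            * dot3 (cross3 (pu x₀ u v) (pv x₀ u v)) (pv (pv x₀) u v)
          - (dot3 (cross3 (pu x₀ u v) (pv x₀ u v)) (pv (pu x₀) u v)) ^ 2)
          / (dot3 (pu x₀ u v) (pu x₀ u v) * dot3 (pv x₀ u v) (pv x₀ u v)
              - (dot3 (pu x₀ u v) (pv x₀ u v)) ^ 2) ^ 2
        = -16 / ((u ^ 2 + v ^ 2) * (1 + u ^ 2 + v ^ 2) ^ 4) := by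
    rw [hnum, hden]
    field_simp
  refine ⟨hK, ?_⟩
  rw [hK]
  have hs : Real.sqrt (u ^ 2 + v ^ 2) ^ 2 = u ^ 2 + v ^ 2 := Real.sq_sqrt hr.le
  have hsp : 0 < Real.sqrt (u ^ 2 + v ^ 2) := Real.sqrt_pos.mpr hr
  have key : -(-16 / ((u ^ 2 + v ^ 2) * (1 + u ^ 2 + v ^ 2) ^ 4))
      = (4 / (Real.sqrt (u ^ 2 + v ^ 2) * (1 + u ^ 2 + v ^ 2) ^ 2)) ^ 2 := by
    rw [div_pow]
    rw [show (Real.sqrt (u ^ 2 + v ^ 2) * (1 + u ^ 2 + v ^ 2) ^ 2) ^ 2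
        = Real.sqrt (u ^ 2 + v ^ 2) ^ 2 * ((1 + u ^ 2 + v ^ 2) ^ 2) ^ 2 from by ring, hs]
    rw [neg_div, neg_neg]
    norm_num
    ring
  rw [key, Real.sqrt_sq (by positivity)]
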